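/- Color a uniformly random m-subset of {1,...,m+n} red and the rest blue, with m = m(n) = o(√n). Then the probability that there exist at least three blue points between consecutive red points, before the first red point, and after the last red point, tends to 1 as n → ∞; consequently the size of the largest balanced interval equals 2 with high probability. -/

import Mathlib

open Filter

/- ### Auxiliary lemmas -/

/-- descFactorial product bound: `(a+1-m)^m * b! / (b-m)! ≤ a!/(a-m)! * b^m`. -/
lemma auxDF (a b : ℕ) : ∀ m : ℕ, (a + 1 - m)^m * Nat.descFactorial b m ≤ Nat.descFactorial a m * b^m := by
  intro m
  induction m with
  | zero => simp
  | succ k ih =>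
    rw [Nat.descFactorial_succ, Nat.descFactorial_succ]
    have h1 : a + 1 - (k+1) = a - k := by omega
    rw [h1]
    calc (a - k)^(k+1) * ((b-k) * Nat.descFactorial b k)
        = ((a-k)^k * Nat.descFactorial b k) * ((a-k)*(b-k)) := by ring
      _ ≤ ((a+1-k)^k * Nat.descFactorial b k) * ((a-k)*b) :=
          Nat.mul_le_mul (Nat.mul_le_mul_right _ (Nat.pow_le_pow_left (by omega) k))
            (Nat.mul_le_mul_left _ (Nat.sub_le b k))
      _ ≤ (Nat.descFactorial a k * b^k) * ((a-k)*b) := Nat.mul_le_mul_right _ ih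
      _ = ((a-k) * Nat.descFactorial a k) * b^(k+1) := by ring

/-- Ratio of binomial coefficients lower bound. -/
lemma chooseRatio (a b m : ℕ) (hma : m ≤ a) (hab : a ≤ b) (hb : 0 < b) :
    1 - (m:ℝ) * (((b:ℝ) - a - 1 + m)/b) ≤ (a.choose m : ℝ)/(b.choose m) := by
  have hdb : 0 < Nat.descFactorial b m := by
    rw [Nat.descFactorial_eq_factorial_mul_choose]
    exact Nat.mul_pos (Nat.factorial_pos m) (Nat.choose_pos (le_trans hma hab))
  have key := auxDF a b m
  have hbR : (0:ℝ) < b := by exact_mod_cast hb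
  have hdbR : (0:ℝ) < Nat.descFactorial b m := by exact_mod_cast hdb
  have keyR : (((a + 1 - m : ℕ) : ℝ))^m * Nat.descFactorial b m ≤ (Nat.descFactorial a m : ℝ) * (b:ℝ)^m := by
    exact_mod_cast key
  have hcast : ((a + 1 - m : ℕ) : ℝ) = (a:ℝ) + 1 - m := by
    push_cast [Nat.cast_sub (by omega : m ≤ a + 1)]; ring
  set x : ℝ := ((a:ℝ) + 1 - m)/b with hx
  have hx0 : 0 ≤ x := by
    apply div_nonneg _ hbR.le
    have : (m:ℝ) ≤ a := by exact_mod_cast hma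
    linarith
  have bern : 1 + (m:ℝ) * (x - 1) ≤ x^m := by
    have := one_add_mul_le_pow (a := x - 1) (by linarith) m
    simpa using this
  have step1 : x^m ≤ (Nat.descFactorial a m : ℝ)/(Nat.descFactorial b m) := by
    rw [div_pow, div_le_div_iff₀ (by positivity) hdbR]
    rw [hcast] at keyR
    linarith [keyR]
  have step2 : (Nat.descFactorial a m : ℝ)/(Nat.descFactorial b m) = (a.choose m : ℝ)/(b.choose m) := by
    rw [Nat.descFactorial_eq_factorial_mul_choose, Nat.descFactorial_eq_factorial_mul_choose]
    push_cast
    rw [mul_div_mul_left]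
    exact_mod_cast (Nat.factorial_pos m).ne'
  have hfin : 1 - (m:ℝ) * (((b:ℝ) - a - 1 + m)/b) = 1 + (m:ℝ) * (x - 1) := by
    rw [hx]; field_simp; ring
  rw [hfin]
  calc 1 + (m:ℝ)*(x-1) ≤ x^m := bern
    _ ≤ _ := step1
    _ = _ := step2

/- The separation property implies that every balanced interval with a red point
has exactly one red and one blue point. -/
open Classical in
lemma sepImp (K : ℕ) (S : Finset ℕ) (h2 : ∀ i ∈ S, ∀ j ∈ S, i < j → i + 4 ≤ j)
    (a b : ℕ)
    (heq : ((Finset.Icc 1 K).filter (fun p => a ≤ p ∧ p ≤ b ∧ p ∈ S)).card =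
           ((Finset.Icc 1 K).filter (fun p => a ≤ p ∧ p ≤ b ∧ p ∉ S)).card)
    (hpos : 0 < ((Finset.Icc 1 K).filter (fun p => a ≤ p ∧ p ≤ b ∧ p ∈ S)).card) :
    ((Finset.Icc 1 K).filter (fun p => a ≤ p ∧ p ≤ b ∧ p ∈ S)).card = 1 ∧
    ((Finset.Icc 1 K).filter (fun p => a ≤ p ∧ p ≤ b ∧ p ∉ S)).card = 1 := by
  set R := (Finset.Icc 1 K).filter (fun p => a ≤ p ∧ p ≤ b ∧ p ∈ S) with hR
  set B := (Finset.Icc 1 K).filter (fun p => a ≤ p ∧ p ≤ b ∧ p ∉ S) with hB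
  have hmemR : ∀ p, p ∈ R ↔ (1 ≤ p ∧ p ≤ K) ∧ a ≤ p ∧ p ≤ b ∧ p ∈ S := by
    intro p; rw [hR, Finset.mem_filter, Finset.mem_Icc]
  have hmemB : ∀ p, p ∈ B ↔ (1 ≤ p ∧ p ≤ K) ∧ a ≤ p ∧ p ≤ b ∧ p ∉ S := by
    intro p; rw [hB, Finset.mem_filter, Finset.mem_Icc]
  suffices h : R.card ≤ 1 by
    constructor <;> omega
  by_contra hlt
  push_neg at hlt
  have hne : R.Nonempty := Finset.card_pos.mp hpos
  set M0 := R.max' hne with hM0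
  have hM0R : M0 ∈ R := R.max'_mem hne
  set D := (R.erase M0) ×ˢ ({1,2,3} : Finset ℕ) with hD
  have hDcard : D.card = (R.card - 1) * 3 := by
    rw [hD, Finset.card_product, Finset.card_erase_of_mem hM0R]
    norm_num
  have hmaps : ∀ p ∈ D, p.1 + p.2 ∈ B := by
    rintro ⟨i, d⟩ hp
    rw [hD, Finset.mem_product] at hp
    obtain ⟨hi, hd⟩ := hp
    have hiR : i ∈ R := Finset.mem_of_mem_erase hi
    have hine : i ≠ M0 := Finset.ne_of_mem_erase hi
    have hile : i ≤ M0 := R.le_max' i hiR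
    have hilt : i < M0 := lt_of_le_of_ne hile hine
    have hiS : i ∈ S := ((hmemR i).mp hiR).2.2.2
    have hM0S : M0 ∈ S := ((hmemR M0).mp hM0R).2.2.2
    have hgap : i + 4 ≤ M0 := h2 i hiS M0 hM0S hilt
    have hd3 : d = 1 ∨ d = 2 ∨ d = 3 := by simpa using hd
    have hM0b : M0 ≤ b := ((hmemR M0).mp hM0R).2.2.1
    have hM0K : M0 ≤ K := ((hmemR M0).mp hM0R).1.2
    have hia : a ≤ i := ((hmemR i).mp hiR).2.1
    have hidS : i + d ∉ S := by
      intro hmem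
      have := h2 i hiS (i + d) hmem (by omega)
      omega
    exact (hmemB (i + d)).mpr ⟨⟨by omega, by omega⟩, by omega, by omega, hidS⟩
  have hinj : Set.InjOn (fun p : ℕ × ℕ => p.1 + p.2) ↑D := by
    rintro ⟨i, d⟩ hp ⟨i', d'⟩ hp' hsum
    simp only [hD, Finset.coe_product, Set.mem_prod, Finset.mem_coe] at hp hp'
    have hiS : i ∈ S := ((hmemR i).mp (Finset.mem_of_mem_erase hp.1)).2.2.2
    have hiS' : i' ∈ S := ((hmemR i').mp (Finset.mem_of_mem_erase hp'.1)).2.2.2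
    have hd3 : d = 1 ∨ d = 2 ∨ d = 3 := by simpa using hp.2
    have hd3' : d' = 1 ∨ d' = 2 ∨ d' = 3 := by simpa using hp'.2
    simp only at hsum
    rcases lt_trichotomy i i' with h | h | h
    · have := h2 i hiS i' hiS' h; omega
    · have : d = d' := by omega
      simp [h, this]
    · have := h2 i' hiS' i hiS h; omega
  have hle : D.card ≤ B.card := Finset.card_le_card_of_injOn _ hmaps hinj
  omega

/- ### The injection `T ↦ {t + 3·rank(t)}` -/

def gmap (T : Finset ℕ) (x : ℕ) : ℕ := x + 3 * (T.filter (· ≤ x)).card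

lemma gmap_mono (T : Finset ℕ) {x y : ℕ} (hxy : x ≤ y) : gmap T x ≤ gmap T y := by
  unfold gmap
  have hsub : T.filter (· ≤ x) ⊆ T.filter (· ≤ y) :=
    Finset.monotone_filter_right T (fun z _ hz => le_trans hz hxy)
  have := Finset.card_le_card hsub
  omega

lemma gmap_gap (T : Finset ℕ) {x y : ℕ} (hy : y ∈ T) (hxy : x < y) :
    gmap T x + 4 ≤ gmap T y := by
  unfold gmap
  have hss : T.filter (· ≤ x) ⊂ T.filter (· ≤ y) := by
    rw [Finset.ssubset_iff_of_subset (Finset.monotone_filter_right T (fun z _ (hz : z ≤ x) => le_trans hz hxy.le))]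
    exact ⟨y, Finset.mem_filter.mpr ⟨hy, le_refl y⟩, fun hc => by
      have := (Finset.mem_filter.mp hc).2; omega⟩
  have := Finset.card_lt_card hss
  omega

lemma gmap_injOn (T : Finset ℕ) : Set.InjOn (gmap T) ↑T := by
  intro x hx y hy hxy
  by_contra hne
  rcases lt_or_gt_of_ne hne with h | h
  · have := gmap_gap T hy h; omega
  · have := gmap_gap T hx h; omega

lemma gmap_reflect (T : Finset ℕ) {x y : ℕ} (hxy : gmap T x < gmap T y) : x < y := by
  by_contra hle
  push_neg at hle
  have := gmap_mono T hle
  omega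

lemma gmap_filter_image (T : Finset ℕ) {x : ℕ} (hx : x ∈ T) :
    (T.image (gmap T)).filter (· ≤ gmap T x) = (T.filter (· ≤ x)).image (gmap T) := by
  ext v
  simp only [Finset.mem_filter, Finset.mem_image]
  constructor
  · rintro ⟨⟨y, hy, rfl⟩, hle⟩
    refine ⟨y, ⟨hy, ?_⟩, rfl⟩
    by_contra hgt
    push_neg at hgt
    have := gmap_gap T hy hgt
    omega
  · rintro ⟨y, ⟨hyT, hyx⟩, rfl⟩
    exact ⟨⟨y, hyT, rfl⟩, gmap_mono T hyx⟩

lemma gmap_recover (T : Finset ℕ) {x : ℕ} (hx : x ∈ T) :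
    gmap T x - 3 * ((T.image (gmap T)).filter (· ≤ gmap T x)).card = x := by
  rw [gmap_filter_image T hx,
    Finset.card_image_of_injOn ((gmap_injOn T).mono (by
      intro z hz; exact Finset.mem_coe.mpr (Finset.mem_of_mem_filter z (Finset.mem_coe.mp hz))))]
  unfold gmap
  omega

lemma gmap_image_recover (T : Finset ℕ) :
    (T.image (gmap T)).image (fun u => u - 3 * ((T.image (gmap T)).filter (· ≤ u)).card) = T := by
  rw [Finset.image_image]
  have : T.image ((fun u => u - 3 * ((T.image (gmap T)).filter (· ≤ u)).card) ∘ (gmap T)) =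
      T.image id := by
    apply Finset.image_congr
    intro x hx
    exact gmap_recover T hx
  rw [this, Finset.image_id]

open Classical in
lemma count1_lower (M N : ℕ) (h : 3*M + 3 ≤ N) :
    (N - 2*M - 3).choose M ≤ ((Finset.Icc 1 (M + N)).powerset.filter (fun S : Finset ℕ =>
          S.card = M ∧ (∀ i ∈ S, 4 ≤ i ∧ i + 3 ≤ M + N) ∧
          (∀ i ∈ S, ∀ j ∈ S, i < j → i + 4 ≤ j))).card := by
  have hAcard : ((Finset.Icc 1 (N - 2*M - 3)).powersetCard M).card = (N - 2*M - 3).choose M := by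
    rw [Finset.card_powersetCard, Nat.card_Icc]
    simp
  rw [← hAcard]
  apply Finset.card_le_card_of_injOn (fun T => T.image (gmap T))
  · intro T hT
    rw [Finset.mem_coe, Finset.mem_powersetCard] at hT
    obtain ⟨hsub, hcard⟩ := hT
    have hbound : ∀ x ∈ T, 4 ≤ gmap T x ∧ gmap T x + 3 ≤ M + N := by
      intro x hx
      have hxA : 1 ≤ x ∧ x ≤ N - 2*M - 3 := Finset.mem_Icc.mp (hsub hx)
      have hc1 : 1 ≤ (T.filter (· ≤ x)).card := by
        rw [Nat.one_le_iff_ne_zero, ← Nat.pos_iff_ne_zero, Finset.card_pos]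
        exact ⟨x, Finset.mem_filter.mpr ⟨hx, le_refl x⟩⟩
      have hcM : (T.filter (· ≤ x)).card ≤ M := hcard ▸ Finset.card_filter_le T _
      unfold gmap
      omega
    rw [Finset.mem_coe, Finset.mem_filter]
    refine ⟨?_, ?_, ?_, ?_⟩
    · rw [Finset.mem_powerset]
      intro u hu
      obtain ⟨x, hx, rfl⟩ := Finset.mem_image.mp hu
      have := hbound x hx
      rw [Finset.mem_Icc]
      omega
    · rw [Finset.card_image_of_injOn (gmap_injOn T), hcard]
    · intro i hi
      obtain ⟨x, hx, rfl⟩ := Finset.mem_image.mp hi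
      exact hbound x hx
    · intro i hi j hj hij
      obtain ⟨x, hx, rfl⟩ := Finset.mem_image.mp hi
      obtain ⟨y, hy, rfl⟩ := Finset.mem_image.mp hj
      exact gmap_gap T hy (gmap_reflect T hij)
  · intro T hT T' hT' heq
    simp only at heq
    calc T = Finset.image (fun u => u - 3 * ((T.image (gmap T)).filter (· ≤ u)).card) (T.image (gmap T)) := (gmap_image_recover T).symm
      _ = Finset.image (fun u => u - 3 * ((T'.image (gmap T')).filter (· ≤ u)).card) (T'.image (gmap T')) := by rw [heq]
      _ = T' := gmap_image_recover T'

/-- Trivial upper bound: the number of `M`-subsets of `{1,…,M+N}` with any property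
is at most `C(M+N, M)`. -/
lemma card_filter_le_choose {M N : ℕ} (p : Finset ℕ → Prop) [DecidablePred p]
    (hp : ∀ S, p S → S.card = M) :
    ((Finset.Icc 1 (M+N)).powerset.filter p).card ≤ (M+N).choose M := by
  have hsub : ((Finset.Icc 1 (M+N)).powerset.filter p) ⊆ (Finset.Icc 1 (M+N)).powersetCard M := by
    intro S hS
    rw [Finset.mem_filter, Finset.mem_powerset] at hS
    rw [Finset.mem_powersetCard]
    exact ⟨hS.1, hp S hS.2⟩
  have := Finset.card_le_card hsub
  rwa [Finset.card_powersetCard, Nat.card_Icc, Nat.add_sub_cancel] at this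

lemma invSqrtTend : Tendsto (fun n : ℕ => 1/Real.sqrt n) atTop (nhds 0) := by
  have h1 : Tendsto (fun n : ℕ => Real.sqrt n) atTop atTop := by
    apply tendsto_atTop_atTop.mpr
    intro b
    refine ⟨⌈b^2⌉₊, fun a ha => ?_⟩
    have h2 : (b^2 : ℝ) ≤ a := le_trans (Nat.le_ceil _) (by exact_mod_cast ha)
    calc b ≤ |b| := le_abs_self b
      _ = Real.sqrt (b^2) := (Real.sqrt_sq_eq_abs b).symm
      _ ≤ Real.sqrt a := Real.sqrt_le_sqrt h2
  simp only [one_div]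
  exact h1.inv_tendsto_atTop

/- ### Main theorem -/

/- Color a uniformly random `m`-subset `S` of `{1,…,m+n}` red, the rest blue,
with `m = m(n) = o(√n)`.  The probability of the event that there are at
least three blue points before the first red point, after the last red point
and between consecutive red points tends to `1`; consequently, with high
probability every balanced interval contains exactly one red and one blue
point, i.e. the largest balanced interval has size 2.  (Probabilities are
expressed as the proportion of `m`-subsets with the given property.) -/
open Classical in
theorem stmt_18 (m : ℕ → ℕ)
    (hm : Tendsto (fun n : ℕ => (m n : ℝ) / Real.sqrt n) atTop (nhds 0)) :
    Tendsto (fun n : ℕ =>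
      (((Finset.Icc 1 (m n + n)).powerset.filter (fun S : Finset ℕ =>
          S.card = m n ∧
          (∀ i ∈ S, 4 ≤ i ∧ i + 3 ≤ m n + n) ∧
          (∀ i ∈ S, ∀ j ∈ S, i < j → i + 4 ≤ j))).card : ℝ) /
        (Nat.choose (m n + n) (m n) : ℝ)) atTop (nhds 1) ∧
    Tendsto (fun n : ℕ =>
      (((Finset.Icc 1 (m n + n)).powerset.filter (fun S : Finset ℕ =>
          S.card = m n ∧
          ∀ a ∈ Finset.Icc 1 (m n + n), ∀ b ∈ Finset.Icc 1 (m n + n),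
            ((Finset.Icc 1 (m n + n)).filter
              (fun p => a ≤ p ∧ p ≤ b ∧ p ∈ S)).card =
            ((Finset.Icc 1 (m n + n)).filter
              (fun p => a ≤ p ∧ p ≤ b ∧ p ∉ S)).card →
            0 < ((Finset.Icc 1 (m n + n)).filter
              (fun p => a ≤ p ∧ p ≤ b ∧ p ∈ S)).card →
            ((Finset.Icc 1 (m n + n)).filter
              (fun p => a ≤ p ∧ p ≤ b ∧ p ∈ S)).card = 1 ∧
            ((Finset.Icc 1 (m n + n)).filter
              (fun p => a ≤ p ∧ p ≤ b ∧ p ∉ S)).card = 1)).card : ℝ) /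
        (Nat.choose (m n + n) (m n) : ℝ)) atTop (nhds 1) := by
  -- eventually `3 m(n) + 3 ≤ n`
  have hev : ∀ᶠ (n:ℕ) in atTop, 3 * m n + 3 ≤ n := by
    have h1 : ∀ᶠ (n:ℕ) in atTop, (m n : ℝ)/Real.sqrt n < 1/7 :=
      hm.eventually_lt_const (by norm_num)
    filter_upwards [h1, eventually_ge_atTop 49] with n hn hn49
    have hs7 : (7:ℝ) ≤ Real.sqrt n := by
      rw [show (7:ℝ) = Real.sqrt 49 by
        rw [show (49:ℝ) = 7^2 by norm_num, Real.sqrt_sq (by norm_num : (0:ℝ) ≤ 7)]]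
      exact Real.sqrt_le_sqrt (by exact_mod_cast hn49)
    have hs0 : (0:ℝ) < Real.sqrt n := by linarith
    have hmlt : (m n : ℝ) < 1/7 * Real.sqrt n := (div_lt_iff₀ hs0).mp hn
    have hsq : Real.sqrt n * Real.sqrt n = n := Real.mul_self_sqrt (Nat.cast_nonneg n)
    have h49 : (49:ℝ) * m n < (n:ℝ) := by nlinarith
    have h49' : 49 * m n < n := by exact_mod_cast h49
    omega
  -- the lower bounding sequence tends to 1
  have hLtend : Tendsto (fun n : ℕ => 1 - (m n : ℝ) * ((4*(m n:ℝ)+2)/((m n:ℝ)+n)))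
      atTop (nhds 1) := by
    have hz : Tendsto (fun n : ℕ => (m n : ℝ) * ((4*(m n:ℝ)+2)/((m n:ℝ)+n))) atTop (nhds 0) := by
      have hu : Tendsto (fun n : ℕ =>
          4*((m n:ℝ)/Real.sqrt n * ((m n:ℝ)/Real.sqrt n))
          + 2*((m n:ℝ)/Real.sqrt n * (1/Real.sqrt n))) atTop (nhds 0) := by
        have t1 := (hm.mul hm).const_mul (4:ℝ)
        have t2 := (hm.mul invSqrtTend).const_mul (2:ℝ)
        simpa using t1.add t2
      apply tendsto_of_tendsto_of_tendsto_of_le_of_le' tendsto_const_nhds hu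
      · filter_upwards [eventually_ge_atTop 1] with n hn
        have hn0 : (0:ℝ) < n := by exact_mod_cast hn
        positivity
      · filter_upwards [eventually_ge_atTop 1] with n hn
        have hn0 : (0:ℝ) < n := by exact_mod_cast hn
        have hs0 : (0:ℝ) < Real.sqrt n := Real.sqrt_pos.mpr hn0
        have hsq : Real.sqrt n * Real.sqrt n = n := Real.mul_self_sqrt hn0.le
        have step1 : (m n : ℝ) * ((4*(m n:ℝ)+2)/((m n:ℝ)+n)) ≤
            (m n : ℝ) * ((4*(m n:ℝ)+2)/(n:ℝ)) := by
          apply mul_le_mul_of_nonneg_left _ (Nat.cast_nonneg _)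
          apply div_le_div_of_nonneg_left (by positivity) hn0
          have : (0:ℝ) ≤ m n := Nat.cast_nonneg _
          linarith
        have step2 : (m n : ℝ) * ((4*(m n:ℝ)+2)/(n:ℝ)) =
            4*((m n:ℝ)/Real.sqrt n * ((m n:ℝ)/Real.sqrt n))
            + 2*((m n:ℝ)/Real.sqrt n * (1/Real.sqrt n)) := by
          rw [div_mul_div_comm, div_mul_div_comm, hsq, mul_one]
          field_simp
        linarith
    have := tendsto_const_nhds (x := (1:ℝ)) (f := atTop (α := ℕ)) |>.sub hz
    simpa using this
  -- the sandwich inequalities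
  have key : ∀ᶠ (n:ℕ) in atTop,
      (1 - (m n : ℝ) * ((4*(m n:ℝ)+2)/((m n:ℝ)+n)) ≤
        (((Finset.Icc 1 (m n + n)).powerset.filter (fun S : Finset ℕ =>
          S.card = m n ∧
          (∀ i ∈ S, 4 ≤ i ∧ i + 3 ≤ m n + n) ∧
          (∀ i ∈ S, ∀ j ∈ S, i < j → i + 4 ≤ j))).card : ℝ) /
        (Nat.choose (m n + n) (m n) : ℝ)) ∧
      ((((Finset.Icc 1 (m n + n)).powerset.filter (fun S : Finset ℕ =>
          S.card = m n ∧
          (∀ i ∈ S, 4 ≤ i ∧ i + 3 ≤ m n + n) ∧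
          (∀ i ∈ S, ∀ j ∈ S, i < j → i + 4 ≤ j))).card : ℝ) /
        (Nat.choose (m n + n) (m n) : ℝ) ≤
       (((Finset.Icc 1 (m n + n)).powerset.filter (fun S : Finset ℕ =>
          S.card = m n ∧
          ∀ a ∈ Finset.Icc 1 (m n + n), ∀ b ∈ Finset.Icc 1 (m n + n),
            ((Finset.Icc 1 (m n + n)).filter
              (fun p => a ≤ p ∧ p ≤ b ∧ p ∈ S)).card =
            ((Finset.Icc 1 (m n + n)).filter
              (fun p => a ≤ p ∧ p ≤ b ∧ p ∉ S)).card →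
            0 < ((Finset.Icc 1 (m n + n)).filter
              (fun p => a ≤ p ∧ p ≤ b ∧ p ∈ S)).card →
            ((Finset.Icc 1 (m n + n)).filter
              (fun p => a ≤ p ∧ p ≤ b ∧ p ∈ S)).card = 1 ∧
            ((Finset.Icc 1 (m n + n)).filter
              (fun p => a ≤ p ∧ p ≤ b ∧ p ∉ S)).card = 1)).card : ℝ) /
        (Nat.choose (m n + n) (m n) : ℝ)) ∧
      ((((Finset.Icc 1 (m n + n)).powerset.filter (fun S : Finset ℕ =>
          S.card = m n ∧
          ∀ a ∈ Finset.Icc 1 (m n + n), ∀ b ∈ Finset.Icc 1 (m n + n),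
            ((Finset.Icc 1 (m n + n)).filter
              (fun p => a ≤ p ∧ p ≤ b ∧ p ∈ S)).card =
            ((Finset.Icc 1 (m n + n)).filter
              (fun p => a ≤ p ∧ p ≤ b ∧ p ∉ S)).card →
            0 < ((Finset.Icc 1 (m n + n)).filter
              (fun p => a ≤ p ∧ p ≤ b ∧ p ∈ S)).card →
            ((Finset.Icc 1 (m n + n)).filter
              (fun p => a ≤ p ∧ p ≤ b ∧ p ∈ S)).card = 1 ∧
            ((Finset.Icc 1 (m n + n)).filter
              (fun p => a ≤ p ∧ p ≤ b ∧ p ∉ S)).card = 1)).card : ℝ) /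
        (Nat.choose (m n + n) (m n) : ℝ) ≤ 1) := by
    filter_upwards [hev] with n hn
    have hD : (0:ℝ) < ((m n + n).choose (m n) : ℝ) := by
      exact_mod_cast Nat.choose_pos (Nat.le_add_right _ _)
    -- the cardinality facts
    have hc1 : ((n - 2*(m n) - 3).choose (m n) : ℝ) ≤
        (((Finset.Icc 1 (m n + n)).powerset.filter (fun S : Finset ℕ =>
          S.card = m n ∧
          (∀ i ∈ S, 4 ≤ i ∧ i + 3 ≤ m n + n) ∧
          (∀ i ∈ S, ∀ j ∈ S, i < j → i + 4 ≤ j))).card : ℝ) := by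
      exact_mod_cast count1_lower (m n) n hn
    have h12 :
        (((Finset.Icc 1 (m n + n)).powerset.filter (fun S : Finset ℕ =>
          S.card = m n ∧
          (∀ i ∈ S, 4 ≤ i ∧ i + 3 ≤ m n + n) ∧
          (∀ i ∈ S, ∀ j ∈ S, i < j → i + 4 ≤ j))).card : ℝ) ≤
        (((Finset.Icc 1 (m n + n)).powerset.filter (fun S : Finset ℕ =>
          S.card = m n ∧
          ∀ a ∈ Finset.Icc 1 (m n + n), ∀ b ∈ Finset.Icc 1 (m n + n),
            ((Finset.Icc 1 (m n + n)).filter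
              (fun p => a ≤ p ∧ p ≤ b ∧ p ∈ S)).card =
            ((Finset.Icc 1 (m n + n)).filter
              (fun p => a ≤ p ∧ p ≤ b ∧ p ∉ S)).card →
            0 < ((Finset.Icc 1 (m n + n)).filter
              (fun p => a ≤ p ∧ p ≤ b ∧ p ∈ S)).card →
            ((Finset.Icc 1 (m n + n)).filter
              (fun p => a ≤ p ∧ p ≤ b ∧ p ∈ S)).card = 1 ∧
            ((Finset.Icc 1 (m n + n)).filter
              (fun p => a ≤ p ∧ p ≤ b ∧ p ∉ S)).card = 1)).card : ℝ) := by
      apply Nat.cast_le.mpr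
      apply Finset.card_le_card
      intro S hS
      simp only [Finset.mem_filter] at hS ⊢
      exact ⟨hS.1, hS.2.1, fun a _ b _ heq hpos =>
        sepImp (m n + n) S hS.2.2.2 a b heq hpos⟩
    have hup :
        (((Finset.Icc 1 (m n + n)).powerset.filter (fun S : Finset ℕ =>
          S.card = m n ∧
          ∀ a ∈ Finset.Icc 1 (m n + n), ∀ b ∈ Finset.Icc 1 (m n + n),
            ((Finset.Icc 1 (m n + n)).filter
              (fun p => a ≤ p ∧ p ≤ b ∧ p ∈ S)).card =
            ((Finset.Icc 1 (m n + n)).filter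
              (fun p => a ≤ p ∧ p ≤ b ∧ p ∉ S)).card →
            0 < ((Finset.Icc 1 (m n + n)).filter
              (fun p => a ≤ p ∧ p ≤ b ∧ p ∈ S)).card →
            ((Finset.Icc 1 (m n + n)).filter
              (fun p => a ≤ p ∧ p ≤ b ∧ p ∈ S)).card = 1 ∧
            ((Finset.Icc 1 (m n + n)).filter
              (fun p => a ≤ p ∧ p ≤ b ∧ p ∉ S)).card = 1)).card : ℝ) ≤
        ((m n + n).choose (m n) : ℝ) := by
      apply Nat.cast_le.mpr
      refine le_trans (Finset.card_le_card
        (t := (Finset.Icc 1 (m n + n)).powersetCard (m n)) ?_) ?_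
      · intro S hS
        simp only [Finset.mem_filter, Finset.mem_powerset] at hS
        simp only [Finset.mem_powersetCard]
        exact ⟨hS.1, hS.2.1⟩
      · rw [Finset.card_powersetCard, Nat.card_Icc, Nat.add_sub_cancel]
    -- the ratio bound
    have hratio := chooseRatio (n - 2*(m n) - 3) (m n + n) (m n)
      (by omega) (by omega) (by omega)
    have hcastA : ((n - 2*(m n) - 3 : ℕ) : ℝ) = (n:ℝ) - 2*(m n) - 3 := by
      rw [show n - 2*(m n) - 3 = n - (2*(m n)+3) by omega,
        Nat.cast_sub (by omega : 2*(m n)+3 ≤ n)]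
      push_cast; ring
    have hEq : 1 - (m n : ℝ) * ((4*(m n:ℝ)+2)/((m n:ℝ)+n)) =
        1 - (m n:ℝ) * ((((m n + n : ℕ):ℝ) - ((n - 2*(m n) - 3 : ℕ):ℝ) - 1 + (m n)) /
          ((m n + n : ℕ):ℝ)) := by
      rw [hcastA]; push_cast; ring_nf
    have hstart : 1 - (m n : ℝ) * ((4*(m n:ℝ)+2)/((m n:ℝ)+n)) ≤
        ((n - 2*(m n) - 3).choose (m n) : ℝ) / ((m n + n).choose (m n) : ℝ) := by
      rw [hEq]; exact hratio
    refine ⟨le_trans hstart (by gcongr), by gcongr, (div_le_one hD).mpr hup⟩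
  constructor
  · exact tendsto_of_tendsto_of_tendsto_of_le_of_le' hLtend tendsto_const_nhds
      (key.mono fun n h => h.1)
      (key.mono fun n h => by
        have hD : (0:ℝ) < ((m n + n).choose (m n) : ℝ) := by
          exact_mod_cast Nat.choose_pos (Nat.le_add_right _ _)
        exact le_trans h.2.1 h.2.2)
  · exact tendsto_of_tendsto_of_tendsto_of_le_of_le' hLtend tendsto_const_nhds
      (key.mono fun n h => le_trans h.1 h.2.1)
      (key.mono fun n h => h.2.2)
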